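/- If σ_h^S is an L² matrix field whose anti-symmetric part has vanishing moment against J on each element T ((as σ_h^S, J)_{L²(T)} = 0 for all T), and if on each T the local Korn inequality inf_{ρ ∈ RM(T)} ‖∇(w - ρ)‖_{L²(T)} ≤ C'_{K,T} ‖ε(w)‖_{L²(T)} holds for w = u - u_h^C ∈ H¹(T)², then (as σ_h^S, ∇(u - u_h^C))_h ≤ C'_K ‖as σ_h^S‖ ‖ε(u - u_h^C)‖_h with C'_K = max_T C'_{K,T}. -/
import Mathlib


open RealInnerProductSpace

/-- asymmetry pairing bound via local Korn inequalities. On each element t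
    the moment of `asS t` against the rotation `J t` vanishes, and the local Korn
    inequality inf_{α∈ℝ} ‖∇w - α·J‖ ≤ C'_K ‖ε(w)‖ holds; then
    (as σ_h^S, ∇(u - u_h^C))_h ≤ C'_K ‖as σ_h^S‖ ‖ε(u - u_h^C)‖_h. -/
theorem asymmetry_korn_bound {H : Type*} [NormedAddCommGroup H] [InnerProductSpace ℝ H]
    {ι : Type*} (s : Finset ι) (asS gradw epsw J : ι → H) (CK : ℝ) (hCK : 0 ≤ CK)
    (horth : ∀ t ∈ s, ⟪asS t, J t⟫ = 0)
    (hKorn : ∀ t ∈ s, (⨅ α : ℝ, ‖gradw t - α • J t‖) ≤ CK * ‖epsw t‖) :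
    ∑ t ∈ s, ⟪asS t, gradw t⟫ ≤
      CK * Real.sqrt (∑ t ∈ s, ‖asS t‖ ^ 2) * Real.sqrt (∑ t ∈ s, ‖epsw t‖ ^ 2) := by
  -- Step 1: local bound ⟪asS t, gradw t⟫ ≤ ‖asS t‖ * (CK * ‖epsw t‖)
  have hloc : ∀ t ∈ s, ⟪asS t, gradw t⟫ ≤ ‖asS t‖ * (CK * ‖epsw t‖) := by
    intro t ht
    have key : ∀ α : ℝ, ⟪asS t, gradw t⟫ ≤ ‖asS t‖ * ‖gradw t - α • J t‖ := by
      intro α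
      have : ⟪asS t, gradw t⟫ = ⟪asS t, gradw t - α • J t⟫ := by
        rw [inner_sub_right, inner_smul_right, horth t ht]; ring
      rw [this]
      exact real_inner_le_norm _ _
    have hbdd : BddBelow (Set.range fun α : ℝ => ‖gradw t - α • J t‖) :=
      ⟨0, by rintro x ⟨α, rfl⟩; positivity⟩
    have h1 : ⟪asS t, gradw t⟫ ≤ ‖asS t‖ * (⨅ α : ℝ, ‖gradw t - α • J t‖) := by
      rcases eq_or_lt_of_le (norm_nonneg (asS t)) with h0 | h0
      · have hz : asS t = 0 := by
          have := h0.symm; simpa [norm_eq_zero] using this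
        simp [hz]
      · rw [← div_le_iff₀' h0] at *
        apply le_ciInf
        intro α
        rw [div_le_iff₀' h0]
        exact key α
    calc ⟪asS t, gradw t⟫ ≤ ‖asS t‖ * (⨅ α : ℝ, ‖gradw t - α • J t‖) := h1
      _ ≤ ‖asS t‖ * (CK * ‖epsw t‖) :=
        mul_le_mul_of_nonneg_left (hKorn t ht) (norm_nonneg _)
  -- Step 2: sum and Cauchy-Schwarz
  have h2 : ∑ t ∈ s, ⟪asS t, gradw t⟫ ≤ CK * ∑ t ∈ s, ‖asS t‖ * ‖epsw t‖ := by
    rw [Finset.mul_sum]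
    refine Finset.sum_le_sum fun t ht => (hloc t ht).trans_eq (by ring)
  refine h2.trans ?_
  rw [mul_assoc]
  refine mul_le_mul_of_nonneg_left ?_ hCK
  have hcs := Finset.sum_mul_sq_le_sq_mul_sq s (fun t => ‖asS t‖) (fun t => ‖epsw t‖)
  have hnn : (0:ℝ) ≤ ∑ t ∈ s, ‖asS t‖ * ‖epsw t‖ :=
    Finset.sum_nonneg fun t _ => mul_nonneg (norm_nonneg _) (norm_nonneg _)
  calc ∑ t ∈ s, ‖asS t‖ * ‖epsw t‖
      = Real.sqrt ((∑ t ∈ s, ‖asS t‖ * ‖epsw t‖) ^ 2) := (Real.sqrt_sq hnn).symm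
    _ ≤ Real.sqrt ((∑ t ∈ s, ‖asS t‖ ^ 2) * ∑ t ∈ s, ‖epsw t‖ ^ 2) :=
        Real.sqrt_le_sqrt hcs
    _ = Real.sqrt (∑ t ∈ s, ‖asS t‖ ^ 2) * Real.sqrt (∑ t ∈ s, ‖epsw t‖ ^ 2) :=
        Real.sqrt_mul (Finset.sum_nonneg fun t _ => sq_nonneg _) _
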